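/- Top-part factorization: for any partition λ with all parts ≤ n, Q̃_n(X)·Q̃_λ(X) = Q̃_{(n,λ)}(X) in ℤ[x₁,...,x_n], where (n,λ) is the partition obtained by prepending a part equal to n. -/

import Mathlib

open MvPolynomial

/-- The `i`-th elementary symmetric polynomial in the variables `{X j : j ∈ S}`,
i.e. `Q̃_i` on the variable set `S`. -/
noncomputable def Qt (S : Finset ℕ) (i : ℕ) : MvPolynomial ℕ ℤ :=
  ∑ t ∈ Finset.powersetCard i S, ∏ j ∈ t, X j

/-- The two-row `Q̃`-polynomial
`Q̃_{i,j} = Q̃_i Q̃_j + 2 ∑_{k=1}^{j} (-1)^k Q̃_{i+k} Q̃_{j-k}` (for `i ≥ j`). -/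
noncomputable def Qtp (S : Finset ℕ) (i j : ℕ) : MvPolynomial ℕ ℤ :=
  Qt S i * Qt S j +
    2 * ∑ k ∈ Finset.Icc 1 j, (-1 : MvPolynomial ℕ ℤ) ^ k * Qt S (i + k) * Qt S (j - k)

/-- Fuel-based Laplace (Pfaffian) recursion for `Q̃_λ` on a list of parts of even
length: `Q̃_ν = ∑_{j} (-1)^{j-1} Q̃_{ν_j,ν_r} Q̃_{ν∖{ν_j,ν_r}}`. -/
noncomputable def Qpf (S : Finset ℕ) : ℕ → List ℕ → MvPolynomial ℕ ℤ
  | 0, _ => 1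
  | fuel + 1, l =>
    if l.length < 2 then 1
    else
      ∑ j ∈ Finset.range (l.length - 1),
        (-1 : MvPolynomial ℕ ℤ) ^ j * Qtp S (l.getD j 0) (l.getLast?.getD 0) *
          Qpf S fuel (l.dropLast.eraseIdx j)

/-- `Q̃_λ` for a partition `λ` (list of parts), padding with a zero part
to make the length even. -/
noncomputable def Qlam (S : Finset ℕ) (l : List ℕ) : MvPolynomial ℕ ℤ :=
  Qpf S (l.length + 1) (if Even l.length then l else l ++ [0])

namespace QAux
open Finset

lemma Qt_zero (S : Finset ℕ) : Qt S 0 = 1 := by simp [Qt]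

lemma Qt_eq_zero (S : Finset ℕ) {i : ℕ} (h : S.card < i) : Qt S i = 0 := by
  rw [Qt, Finset.powersetCard_eq_empty.mpr h, Finset.sum_empty]

lemma Qtp_zero_right (S : Finset ℕ) (x : ℕ) : Qtp S x 0 = Qt S x := by
  simp [Qtp, Qt_zero]

lemma Qtp_top (n j : ℕ) :
    Qtp (Finset.range n) n j = Qt (Finset.range n) n * Qt (Finset.range n) j := by
  rw [Qtp, Finset.sum_eq_zero, mul_zero, add_zero]
  intro k hk
  simp only [Finset.mem_Icc] at hk
  rw [Qt_eq_zero _ (by rw [Finset.card_range]; omega)]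
  ring

lemma Qpf_short (S : Finset ℕ) (F : ℕ) {l : List ℕ} (h : l.length < 2) : Qpf S F l = 1 := by
  cases F with
  | zero => rfl
  | succ F => rw [Qpf, if_pos h]

lemma Qpf_succ (S : Finset ℕ) (F : ℕ) {l : List ℕ} (h : 2 ≤ l.length) :
    Qpf S (F + 1) l =
      ∑ j ∈ Finset.range (l.length - 1),
        (-1 : MvPolynomial ℕ ℤ) ^ j * Qtp S (l.getD j 0) (l.getLast?.getD 0) *
          Qpf S F (l.dropLast.eraseIdx j) := by
  rw [Qpf, if_neg (by omega)]

lemma length_inner {l : List ℕ} {j : ℕ} (hj : j < l.length - 1) :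
    (l.dropLast.eraseIdx j).length = l.length - 2 := by
  have h1 : l.dropLast.length = l.length - 1 := List.length_dropLast
  rw [List.length_eraseIdx, h1, if_pos (by omega)]; omega

lemma Qpf_step (S : Finset ℕ) : ∀ F : ℕ, ∀ l : List ℕ, l.length ≤ 2 * F →
    Qpf S (F + 1) l = Qpf S F l := by
  intro F
  induction F with
  | zero => intro l h; rw [Qpf_short S 1 (by omega)]; rfl
  | succ F ih =>
    intro l h
    by_cases h2 : l.length < 2
    · rw [Qpf_short _ _ h2, Qpf_short _ _ h2]
    · rw [Qpf_succ _ _ (by omega), Qpf_succ _ _ (by omega)]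
      refine Finset.sum_congr rfl fun j hj => ?_
      have hlen : (l.dropLast.eraseIdx j).length ≤ 2 * F := by
        rw [length_inner (Finset.mem_range.mp hj)]; omega
      rw [ih _ hlen]

lemma Qpf_add (S : Finset ℕ) (d : ℕ) : ∀ F : ℕ, ∀ l : List ℕ, l.length ≤ 2 * F →
    Qpf S (F + d) l = Qpf S F l := by
  induction d with
  | zero => intro F l _; rfl
  | succ d ih =>
    intro F l h
    rw [Nat.add_succ, Qpf_step S (F + d) l (by omega), ih F l h]

lemma Qpf_congr (S : Finset ℕ) {F G : ℕ} {l : List ℕ} (hF : l.length ≤ 2 * F)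
    (hG : l.length ≤ 2 * G) : Qpf S F l = Qpf S G l := by
  rcases le_total F G with h | h
  · obtain ⟨d, rfl⟩ := Nat.exists_eq_add_of_le h
    rw [Qpf_add S d F l hF]
  · obtain ⟨d, rfl⟩ := Nat.exists_eq_add_of_le h
    rw [Qpf_add S d G l hG]

noncomputable def Qst (S : Finset ℕ) (l : List ℕ) : MvPolynomial ℕ ℤ := Qpf S l.length l

lemma Qpf_eq_Qst (S : Finset ℕ) {F : ℕ} {l : List ℕ} (h : l.length ≤ 2 * F) :
    Qpf S F l = Qst S l :=
  Qpf_congr S h (by omega)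

lemma Qst_short (S : Finset ℕ) {l : List ℕ} (h : l.length < 2) : Qst S l = 1 :=
  Qpf_short S _ h

lemma Qst_expand (S : Finset ℕ) {l : List ℕ} (h : 2 ≤ l.length) :
    Qst S l = ∑ j ∈ Finset.range (l.length - 1),
        (-1 : MvPolynomial ℕ ℤ) ^ j * Qtp S (l.getD j 0) (l.getLast?.getD 0) *
          Qst S (l.dropLast.eraseIdx j) := by
  obtain ⟨m, hm⟩ : ∃ m, l.length = m + 1 := ⟨l.length - 1, by omega⟩
  have e1 : Qst S l = Qpf S (m + 1) l := by rw [Qst, hm]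
  rw [e1, Qpf_succ S m h]
  refine Finset.sum_congr rfl fun j hj => ?_
  have hlen : (l.dropLast.eraseIdx j).length ≤ 2 * m := by
    rw [length_inner (Finset.mem_range.mp hj)]; omega
  rw [Qpf_eq_Qst S hlen]

lemma eraseIdx_eraseIdx {α : Type*} : ∀ (L : List α) (a b : ℕ), a < b →
    (L.eraseIdx a).eraseIdx (b - 1) = (L.eraseIdx b).eraseIdx a := by
  intro L
  induction L with
  | nil => intro a b _; simp
  | cons x t ih =>
    intro a b hab
    match a, b with
    | 0, b + 1 =>
      simp only [List.eraseIdx_cons_zero, List.eraseIdx_cons_succ, Nat.add_sub_cancel]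
    | a + 1, b + 1 =>
      obtain ⟨c, rfl⟩ : ∃ c, b = c + 1 := ⟨b - 1, by omega⟩
      simp only [List.eraseIdx_cons_succ]
      rw [show c + 1 + 1 - 1 = c + 1 by omega]
      simp only [List.eraseIdx_cons_succ]
      have h := ih a (c + 1) (by omega)
      rw [show c + 1 - 1 = c by omega] at h
      rw [h]

lemma getD_eraseIdx (L : List ℕ) (j k : ℕ) (hj : j < L.length) (hk : k < L.length - 1) :
    (L.eraseIdx j).getD k 0 = L.getD (if k < j then k else k + 1) 0 := by
  have hlen : (L.eraseIdx j).length = L.length - 1 := by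
    rw [List.length_eraseIdx, if_pos hj]
  rw [List.getD_eq_getElem _ _ (by omega), List.getElem_eraseIdx]
  split
  · exact (List.getD_eq_getElem _ _ (by omega)).symm
  · exact (List.getD_eq_getElem _ _ (by omega)).symm

lemma cancel (S : Finset ℕ) (h : ℕ → ℕ → MvPolynomial ℕ ℤ) (hsym : ∀ x y, h x y = h y x)
    (g : List ℕ → MvPolynomial ℕ ℤ) (L : List ℕ) :
    ∑ j ∈ Finset.range L.length, (-1 : MvPolynomial ℕ ℤ) ^ j *
      ∑ k ∈ Finset.range (L.length - 1),
        (-1 : MvPolynomial ℕ ℤ) ^ k * h (L.getD j 0) ((L.eraseIdx j).getD k 0) *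
          g ((L.eraseIdx j).eraseIdx k) = 0 := by
  set N := L.length with hN
  set W : ℕ × ℕ → MvPolynomial ℕ ℤ := fun p =>
    (-1) ^ (p.1 + p.2 + if p.1 < p.2 then 1 else 0) * h (L.getD p.1 0) (L.getD p.2 0) *
      g ((L.eraseIdx (max p.1 p.2)).eraseIdx (min p.1 p.2)) with hW
  have step1 : ∑ j ∈ Finset.range N, (-1 : MvPolynomial ℕ ℤ) ^ j *
      ∑ k ∈ Finset.range (N - 1),
        (-1 : MvPolynomial ℕ ℤ) ^ k * h (L.getD j 0) ((L.eraseIdx j).getD k 0) *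
          g ((L.eraseIdx j).eraseIdx k) = ∑ p ∈ (Finset.range N).offDiag, W p := by
    simp only [Finset.mul_sum]
    rw [← Finset.sum_product']
    refine Finset.sum_nbij' (i := fun p => (p.1, if p.2 < p.1 then p.2 else p.2 + 1))
      (j := fun q => (q.1, if q.2 < q.1 then q.2 else q.2 - 1)) ?_ ?_ ?_ ?_ ?_
    · rintro ⟨a, b⟩ hab
      simp only [Finset.mem_product, Finset.mem_range] at hab
      simp only [Finset.mem_offDiag, Finset.mem_range]
      split_ifs <;> exact ⟨by omega, by omega, by omega⟩
    · rintro ⟨a, b⟩ hab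
      simp only [Finset.mem_offDiag, Finset.mem_range] at hab
      simp only [Finset.mem_product, Finset.mem_range]
      split_ifs <;> exact ⟨by omega, by omega⟩
    · rintro ⟨a, b⟩ hab
      simp only [Finset.mem_product, Finset.mem_range] at hab
      refine Prod.ext_iff.mpr ⟨rfl, ?_⟩
      dsimp only
      split_ifs <;> omega
    · rintro ⟨a, b⟩ hab
      simp only [Finset.mem_offDiag, Finset.mem_range] at hab
      refine Prod.ext_iff.mpr ⟨rfl, ?_⟩
      dsimp only
      split_ifs <;> omega
    · rintro ⟨a, b⟩ hab
      simp only [Finset.mem_product, Finset.mem_range] at hab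
      obtain ⟨ha, hb⟩ := hab
      simp only [hW]
      by_cases hba : b < a
      · simp only [if_pos hba]
        rw [getD_eraseIdx L a b (by omega) (by omega), if_pos hba]
        rw [if_neg (show ¬ a < b by omega)]
        rw [max_eq_left (by omega : b ≤ a), min_eq_right (by omega : b ≤ a)]
        ring
      · simp only [if_neg hba]
        rw [getD_eraseIdx L a b (by omega) (by omega), if_neg hba]
        rw [if_pos (by omega : a < b + 1)]
        rw [max_eq_right (by omega : a ≤ b + 1), min_eq_left (by omega : a ≤ b + 1)]
        have h1 : (L.eraseIdx (b + 1)).eraseIdx a = (L.eraseIdx a).eraseIdx b := by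
          have := eraseIdx_eraseIdx L a (b + 1) (by omega)
          rw [show b + 1 - 1 = b by omega] at this
          exact this.symm
        rw [h1, show a + (b + 1) + 1 = a + b + 2 by omega, pow_add]
        ring
  rw [step1]
  have hanti : ∀ p ∈ (Finset.range N).offDiag, W (p.2, p.1) = -W p := by
    rintro ⟨a, b⟩ hab
    simp only [Finset.mem_offDiag, Finset.mem_range] at hab
    simp only [hW]
    rw [hsym (L.getD b 0) (L.getD a 0), max_comm, min_comm]
    rcases lt_or_gt_of_ne hab.2.2 with hlt | hlt
    · rw [if_neg (show ¬ b < a by omega), if_pos hlt,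
        show b + a + 0 = a + b by omega, pow_add]
      ring
    · rw [if_pos hlt, if_neg (show ¬ a < b by omega),
        show b + a + 1 = a + b + 1 by omega, show a + b + 0 = a + b by omega, pow_add]
      ring
  have hswap : ∑ p ∈ (Finset.range N).offDiag, W p
      = ∑ p ∈ (Finset.range N).offDiag, W (p.2, p.1) := by
    refine Finset.sum_nbij' (i := Prod.swap) (j := Prod.swap) ?_ ?_ ?_ ?_ ?_
    · rintro ⟨a, b⟩ hab
      simp only [Finset.mem_offDiag, Finset.mem_range] at hab ⊢
      exact ⟨hab.2.1, hab.1, hab.2.2.symm⟩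
    · rintro ⟨a, b⟩ hab
      simp only [Finset.mem_offDiag, Finset.mem_range] at hab ⊢
      exact ⟨hab.2.1, hab.1, hab.2.2.symm⟩
    · rintro ⟨a, b⟩ _; rfl
    · rintro ⟨a, b⟩ _; rfl
    · rintro ⟨a, b⟩ _; rfl
  have hzero : ∑ p ∈ (Finset.range N).offDiag, W p
      = -∑ p ∈ (Finset.range N).offDiag, W p := by
    nth_rewrite 1 [hswap]
    rw [← Finset.sum_neg_distrib]
    exact Finset.sum_congr rfl hanti
  have h2 : (2 : MvPolynomial ℕ ℤ) * ∑ p ∈ (Finset.range N).offDiag, W p = 0 := by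
    rw [two_mul]
    nth_rewrite 2 [hzero]
    ring
  rcases mul_eq_zero.mp h2 with h' | h'
  · exact absurd h' (by norm_num)
  · exact h'

lemma Qst_nil (S : Finset ℕ) : Qst S [] = 1 := rfl

lemma Qst_append_expand (S : Finset ℕ) (e : List ℕ) (b : ℕ) (h : 1 ≤ e.length) :
    Qst S (e ++ [b]) = ∑ k ∈ Finset.range e.length,
      (-1 : MvPolynomial ℕ ℤ) ^ k * Qtp S (e.getD k 0) b * Qst S (e.eraseIdx k) := by
  rw [Qst_expand S (by simp only [List.length_append, List.length_cons, List.length_nil]; omega)]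
  rw [show (e ++ [b]).length - 1 = e.length from by rw [List.length_append]; simp]
  refine Finset.sum_congr rfl fun k hk => ?_
  have hk' := Finset.mem_range.mp hk
  rw [List.getD_append _ _ _ _ hk', List.getLast?_concat, List.dropLast_concat]
  simp only [Option.getD_some]

lemma Qst_append_zero_expand (S : Finset ℕ) (e : List ℕ) (h : 1 ≤ e.length) :
    Qst S (e ++ [0]) = ∑ k ∈ Finset.range e.length,
      (-1 : MvPolynomial ℕ ℤ) ^ k * Qt S (e.getD k 0) * Qst S (e.eraseIdx k) := by
  rw [Qst_append_expand S e 0 h]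
  exact Finset.sum_congr rfl fun k _ => by rw [Qtp_zero_right]

lemma star (S : Finset ℕ) (L : List ℕ) (h : L.length ≠ 1) :
    ∑ j ∈ Finset.range L.length,
      (-1 : MvPolynomial ℕ ℤ) ^ j * Qt S (L.getD j 0) * Qst S (L.eraseIdx j ++ [0]) = 0 := by
  by_cases h0 : L.length = 0
  · rw [h0]; simp
  · have h2 : 2 ≤ L.length := by omega
    have key := cancel S (fun x y => Qt S x * Qt S y) (fun x y => by ring) (Qst S) L
    rw [← key]
    refine Finset.sum_congr rfl fun j hj => ?_
    have hjlt := Finset.mem_range.mp hj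
    have helen : (L.eraseIdx j).length = L.length - 1 := by
      rw [List.length_eraseIdx, if_pos hjlt]
    rw [Qst_append_zero_expand S _ (by omega), helen, Finset.mul_sum, Finset.mul_sum]
    exact Finset.sum_congr rfl fun k _ => by ring

lemma dagger (S : Finset ℕ) (L : List ℕ) (b : ℕ) (h : L.length ≠ 1) :
    ∑ j ∈ Finset.range L.length,
        (-1 : MvPolynomial ℕ ℤ) ^ j * Qtp S (L.getD j 0) b * Qst S (L.eraseIdx j ++ [0])
      + ∑ j ∈ Finset.range L.length,
        (-1 : MvPolynomial ℕ ℤ) ^ j * Qt S (L.getD j 0) * Qst S (L.eraseIdx j ++ [b]) = 0 := by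
  by_cases h0 : L.length = 0
  · rw [h0]; simp
  · have h2 : 2 ≤ L.length := by omega
    have key := cancel S (fun x y => Qtp S x b * Qt S y + Qt S x * Qtp S y b)
      (fun x y => by ring) (Qst S) L
    rw [← Finset.sum_add_distrib, ← key]
    refine Finset.sum_congr rfl fun j hj => ?_
    have hjlt := Finset.mem_range.mp hj
    have helen : (L.eraseIdx j).length = L.length - 1 := by
      rw [List.length_eraseIdx, if_pos hjlt]
    rw [Qst_append_zero_expand S _ (by omega), Qst_append_expand S _ b (by omega), helen,
      Finset.mul_sum, Finset.mul_sum, Finset.mul_sum, ← Finset.sum_add_distrib]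
    exact Finset.sum_congr rfl fun k _ => by ring

set_option maxHeartbeats 800000 in
lemma lemA (n : ℕ) : ∀ N : ℕ, ∀ l : List ℕ, l.length = N → N % 2 = 1 →
    Qst (Finset.range n) (n :: l) = Qt (Finset.range n) n * Qst (Finset.range n) (l ++ [0]) := by
  intro N
  induction N using Nat.strong_induction_on with
  | _ N ih =>
    intro l hlN hN2
    have hne : l ≠ [] := by intro h; rw [h] at hlN; simp at hlN; omega
    obtain ⟨m, hm⟩ : ∃ m, N = 2 * m + 1 := ⟨N / 2, by omega⟩
    set l' := l.dropLast with hl'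
    set b := l.getLast hne with hb
    have hl : l' ++ [b] = l := List.dropLast_append_getLast hne
    have hl'len : l'.length = 2 * m := by rw [hl', List.length_dropLast, hlN]; omega
    have hlast : (n :: l).getLast?.getD 0 = b := by
      rw [← hl, ← List.cons_append, List.getLast?_concat]; rfl
    have hdrop : (n :: l).dropLast = n :: l' := by
      rw [← hl, ← List.cons_append, List.dropLast_concat]
    have hgd : ∀ j < 2 * m, l.getD j 0 = l'.getD j 0 := by
      intro j hj
      rw [← hl, List.getD_append _ _ _ _ (by omega)]
    have eL : Qst (Finset.range n) (n :: l)
        = (-(Qt (Finset.range n) n)) * (∑ j ∈ Finset.range (2 * m),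
            (-1 : MvPolynomial ℕ ℤ) ^ j * Qtp (Finset.range n) (l'.getD j 0) b *
              Qst (Finset.range n) (l'.eraseIdx j ++ [0]))
          + Qt (Finset.range n) n * Qt (Finset.range n) b * Qst (Finset.range n) l' := by
      rw [Qst_expand _ (by rw [List.length_cons, hlN]; omega)]
      simp only [hlast, hdrop]
      rw [show (n :: l).length - 1 = 2 * m + 1 from by rw [List.length_cons, hlN]; omega]
      rw [Finset.sum_range_succ']
      simp only [List.getD_cons_zero, List.getD_cons_succ, List.eraseIdx_cons_zero,
        List.eraseIdx_cons_succ, pow_zero, one_mul]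
      rw [Qtp_top, Finset.mul_sum]
      congr 1
      refine Finset.sum_congr rfl fun j hj => ?_
      have hj' := Finset.mem_range.mp hj
      rw [hgd j hj']
      rw [ih (N - 2) (by omega) (l'.eraseIdx j)
        (by rw [List.length_eraseIdx, if_pos (by omega)]; omega) (by omega)]
      ring
    have hgb : l.getD (2 * m) 0 = b := by
      rw [← hl, List.getD_eq_getElem _ _ (by rw [List.length_append, hl'len]; simp)]
      exact List.getElem_concat_length (l := l') (a := b) (i := 2 * m) (by omega) _
    have hel : l.eraseIdx (2 * m) = l' := by
      rw [← hl, List.eraseIdx_append_of_length_le (by omega) [b]]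
      simp [hl'len]
    have eR : Qst (Finset.range n) (l ++ [0])
        = (∑ k ∈ Finset.range (2 * m),
            (-1 : MvPolynomial ℕ ℤ) ^ k * Qt (Finset.range n) (l'.getD k 0) *
              Qst (Finset.range n) (l'.eraseIdx k ++ [b]))
          + Qt (Finset.range n) b * Qst (Finset.range n) l' := by
      rw [Qst_append_zero_expand _ _ (by rw [hlN]; omega)]
      rw [show l.length = 2 * m + 1 from by rw [hlN]; omega]
      rw [Finset.sum_range_succ]
      congr 1
      · refine Finset.sum_congr rfl fun k hk => ?_
        have hk' := Finset.mem_range.mp hk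
        rw [hgd k hk',
          show l.eraseIdx k = l'.eraseIdx k ++ [b] from by
            rw [← hl, List.eraseIdx_append_of_lt_length (by omega) [b]]]
      · rw [hgb, hel, show ((-1 : MvPolynomial ℕ ℤ)) ^ (2 * m) = 1 from by
          rw [pow_mul]; norm_num, one_mul]
    rw [eL, eR]
    have hd := dagger (Finset.range n) l' b (by omega)
    rw [hl'len] at hd
    linear_combination (-(Qt (Finset.range n) n)) * hd

lemma lemA' (n : ℕ) (l : List ℕ) (hodd : l.length % 2 = 1) :
    Qst (Finset.range n) (n :: l) = Qt (Finset.range n) n * Qst (Finset.range n) (l ++ [0]) :=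
  lemA n l.length l rfl hodd

lemma lemB (n : ℕ) (l : List ℕ) (he : l.length % 2 = 0) :
    Qst (Finset.range n) (n :: (l ++ [0])) = Qt (Finset.range n) n * Qst (Finset.range n) l := by
  by_cases h0 : l.length = 0
  · have : l = [] := List.length_eq_zero_iff.mp h0
    subst this
    rw [List.nil_append, Qst_expand _ (by simp)]
    simp [Finset.sum_range_one, Qtp_zero_right, Qst_nil]
  · rw [← List.cons_append]
    rw [Qst_append_zero_expand _ _ (by simp)]
    rw [show (n :: l).length = l.length + 1 from rfl]
    rw [Finset.sum_range_succ']
    simp only [List.getD_cons_zero, List.getD_cons_succ, List.eraseIdx_cons_zero,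
      List.eraseIdx_cons_succ, pow_zero, one_mul]
    have hterm : ∀ j ∈ Finset.range l.length,
        (-1 : MvPolynomial ℕ ℤ) ^ (j + 1) * Qt (Finset.range n) (l.getD j 0) *
          Qst (Finset.range n) (n :: l.eraseIdx j)
        = (-(Qt (Finset.range n) n)) * ((-1 : MvPolynomial ℕ ℤ) ^ j *
            Qt (Finset.range n) (l.getD j 0) * Qst (Finset.range n) (l.eraseIdx j ++ [0])) := by
      intro j hj
      have hj' := Finset.mem_range.mp hj
      rw [lemA' n (l.eraseIdx j) (by rw [List.length_eraseIdx, if_pos hj']; omega)]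
      ring
    rw [Finset.sum_congr rfl hterm, ← Finset.mul_sum]
    have hstar := star (Finset.range n) l (by omega)
    rw [hstar]
    ring

end QAux


/-- Top-part factorization: for any partition `λ` with all parts `≤ n`,
`Q̃_n · Q̃_λ = Q̃_{(n,λ)}` in `ℤ[x₁,…,x_n]`. -/
theorem Qtilde_prepend_top (n : ℕ) (lam : List ℕ)
    (hlam : List.Pairwise (· ≥ ·) lam) (hle : ∀ a ∈ lam, a ≤ n) :
    Qt (Finset.range n) n * Qlam (Finset.range n) lam
      = Qlam (Finset.range n) (n :: lam) := by
  classical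
  by_cases hev : Even lam.length
  · have h1 : Qlam (Finset.range n) lam = QAux.Qst (Finset.range n) lam := by
      rw [Qlam, if_pos hev]
      exact QAux.Qpf_eq_Qst _ (by omega)
    have hodd : ¬ Even (n :: lam).length := by
      rw [List.length_cons, Nat.even_add_one]; exact fun h => h hev
    have h2 : Qlam (Finset.range n) (n :: lam)
        = QAux.Qst (Finset.range n) ((n :: lam) ++ [0]) := by
      rw [Qlam, if_neg hodd]
      exact QAux.Qpf_eq_Qst _ (by simp only [List.length_append, List.length_cons, List.length_nil]; omega)
    rw [h1, h2, List.cons_append]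
    exact (QAux.lemB n lam (Nat.even_iff.mp hev)).symm
  · have h1 : Qlam (Finset.range n) lam = QAux.Qst (Finset.range n) (lam ++ [0]) := by
      rw [Qlam, if_neg hev]
      exact QAux.Qpf_eq_Qst _ (by simp only [List.length_append, List.length_cons, List.length_nil]; omega)
    have h2 : Qlam (Finset.range n) (n :: lam) = QAux.Qst (Finset.range n) (n :: lam) := by
      rw [Qlam, if_pos (by rw [List.length_cons, Nat.even_add_one]; exact hev)]
      exact QAux.Qpf_eq_Qst _ (by rw [List.length_cons]; omega)
    rw [h1, h2]
    exact (QAux.lemA' n lam (Nat.not_even_iff.mp hev)).symm
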